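/- In the mixture model with known background, the L²(f)-orthogonal projection of the score g = (s−b)/f onto the nuisance tangent set Λ = {h·s/f : ∫ h s = 0, supp(h) ⊆ S} equals Πg = (f/s)·[g − B(C)/F(S)]·I_S, and the residual g − Πg equals (B(C)/F(S))·I_S − (1/(1−λ))·I_C; moreover ∫ (g − Πg)·(h·s/f)·f = 0 for every h with ∫ h s = 0 and supp(h) ⊆ S. -/

import Mathlib

open MeasureTheory

/-- The L²(f)-orthogonal projection of the score g = (s−b)/f onto
the nuisance tangent set Λ = {h·s/f : ∫ h s = 0, supp(h) ⊆ S} is given by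
h = Πg := (f/s)·[g − B(C)/F(S)]·I_S (so the projected element is Πg·s/f): Πg is a
valid nuisance direction, the residual g − Πg·s/f equals
(B(C)/F(S))·I_S − (1/(1−λ))·I_C pointwise, and the residual is orthogonal to every
element of Λ in L²(f). -/
theorem stmt_19 (S C : Set ℝ) (hS : MeasurableSet S) (hC : MeasurableSet C)
    (hdisj : Disjoint S C) (hcover : S ∪ C = Set.univ)
    (b s : ℝ → ℝ) (lam : ℝ) (hlam : lam ∈ Set.Ioo (0:ℝ) 1)
    (hbint : Integrable b) (hbnorm : ∫ x, b x = 1)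
    (hsC : ∀ x ∈ C, s x = 0) (hsint : Integrable s) (hsnorm : ∫ x in S, s x = 1)
    (hspos : ∀ x ∈ S, 0 < s x)
    (f : ℝ → ℝ) (hf : ∀ x, f x = (1 - lam) * b x + lam * s x)
    (hfpos : ∀ x, 0 < f x)
    (BC FS : ℝ) (hBC : BC = ∫ x in C, b x) (hFS : FS = ∫ x in S, f x)
    (hBC0 : 0 < BC)
    (g Pg : ℝ → ℝ) (hg : ∀ x, g x = (s x - b x) / f x)
    (hPg : ∀ x, Pg x = Set.indicator S (fun y => f y / s y * (g y - BC / FS)) x) :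
    ((∀ x ∈ C, Pg x = 0) ∧ (∫ x in S, Pg x * s x = 0)) ∧
    (∀ x, g x - Pg x * s x / f x
        = Set.indicator S (fun _ => BC / FS) x - Set.indicator C (fun _ => 1 / (1 - lam)) x) ∧
    (∀ h : ℝ → ℝ, (∀ x ∈ C, h x = 0) → IntegrableOn (fun x => h x * s x) S →
      (∫ x in S, h x * s x = 0) →
      ∫ x, (g x - Pg x * s x / f x) * (h x * s x / f x) * f x = 0) := by
  obtain ⟨hlam0, hlam1⟩ := hlam
  have hlamne : (1 : ℝ) - lam ≠ 0 := by linarith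
  have hfne : ∀ x, f x ≠ 0 := fun x => (hfpos x).ne'
  have hmem : ∀ x : ℝ, x ∈ S ∨ x ∈ C := fun x => by
    have : x ∈ S ∪ C := by rw [hcover]; exact Set.mem_univ x
    exact this
  have hnotC : ∀ x ∈ S, x ∉ C := fun x hx => Set.disjoint_left.mp hdisj hx
  have hnotS : ∀ x ∈ C, x ∉ S := fun x hx => Set.disjoint_right.mp hdisj hx
  have hfint : Integrable f := by
    have : f = fun x => (1 - lam) * b x + lam * s x := funext hf
    rw [this]
    exact (hbint.const_mul _).add (hsint.const_mul _)
  -- S has positive measure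
  have hSpos : 0 < MeasureTheory.volume S := by
    rw [pos_iff_ne_zero]
    intro h0
    rw [← Measure.restrict_eq_zero] at h0
    rw [h0, integral_zero_measure] at hsnorm
    norm_num at hsnorm
  have hFSpos : 0 < FS := by
    rw [hFS]
    rw [setIntegral_pos_iff_support_of_nonneg_ae
      (Filter.Eventually.of_forall fun x => (hfpos x).le) hfint.integrableOn]
    have : Function.support f ∩ S = S := by
      ext x; simp [Function.mem_support, hfne x]
    rwa [this]
  have hFSne : FS ≠ 0 := hFSpos.ne'
  -- split integral of b
  have hSb : ∫ x in S, b x = 1 - BC := by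
    have hsplit : (∫ x in S, b x) + ∫ x in C, b x = 1 := by
      rw [← integral_union_ae (hdisj.aedisjoint) hC.nullMeasurableSet
        hbint.integrableOn hbint.integrableOn, hcover, setIntegral_univ, hbnorm]
    rw [hBC] at *
    linarith
  -- part a1
  have pa1 : ∀ x ∈ C, Pg x = 0 := fun x hx => by
    rw [hPg, Set.indicator_of_notMem (hnotS x hx)]
  -- part a2
  have pa2 : ∫ x in S, Pg x * s x = 0 := by
    have key : Set.EqOn (fun x => Pg x * s x)
        (fun x => (s x - b x) - BC / FS * f x) S := by
      intro x hx
      have hsx : s x ≠ 0 := (hspos x hx).ne'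
      simp only [hPg, Set.indicator_of_mem hx, hg]
      field_simp [hfne x]
    calc ∫ x in S, Pg x * s x = ∫ x in S, ((s x - b x) - BC / FS * f x) :=
          setIntegral_congr_fun hS key
      _ = ((∫ x in S, s x) - ∫ x in S, b x) - BC / FS * ∫ x in S, f x := by
          have h1 : IntegrableOn (fun x => s x - b x) S := hsint.integrableOn.sub hbint.integrableOn
          have h2 : IntegrableOn (fun x => BC / FS * f x) S := hfint.integrableOn.const_mul _
          rw [integral_sub h1 h2, integral_sub hsint.integrableOn hbint.integrableOn,
            integral_const_mul]
      _ = 0 := by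
          rw [hsnorm, hSb, ← hFS]
          field_simp
          ring
  -- part b : residual formula
  have pb : ∀ x, g x - Pg x * s x / f x
      = Set.indicator S (fun _ => BC / FS) x
        - Set.indicator C (fun _ => 1 / (1 - lam)) x := by
    intro x
    rcases hmem x with hx | hx
    · have hsx : s x ≠ 0 := (hspos x hx).ne'
      rw [hPg, Set.indicator_of_mem hx, Set.indicator_of_mem hx,
        Set.indicator_of_notMem (hnotC x hx)]
      field_simp [hfne x]
      ring
    · have hsx : s x = 0 := hsC x hx
      have hbx : b x ≠ 0 := by
        intro h0
        have := hfpos x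
        rw [hf x, h0, hsx] at this
        norm_num at this
      rw [pa1 x hx, Set.indicator_of_mem hx, Set.indicator_of_notMem (hnotS x hx),
        hg, hsx, hf x, hsx]
      field_simp
      ring
    -- part c : orthogonality
  refine ⟨⟨pa1, pa2⟩, pb, ?_⟩
  intro h hhC hhint hhzero
  have heq : (fun x => (g x - Pg x * s x / f x) * (h x * s x / f x) * f x)
      = Set.indicator S (fun y => BC / FS * (h y * s y)) := by
    funext x
    rcases hmem x with hx | hx
    · rw [Set.indicator_of_mem hx, pb x, Set.indicator_of_mem hx,
        Set.indicator_of_notMem (hnotC x hx)]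
      field_simp [hfne x]
      ring
    · rw [Set.indicator_of_notMem (hnotS x hx), hhC x hx]
      ring
  rw [heq, integral_indicator hS, integral_const_mul, hhzero, mul_zero]
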